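/- Let c > 0 and let f be a continuous probability density on [0,c] with f(v) > 0 for all v ∈ [0,c]. Let F(v) = ∫₀ᵛ f(u) du and φ(t) = t − (1 − F(t))/f(t) (the virtual value function). Then for every l ∈ [0,1] and every x ∈ (0,1), the function x ↦ g_f(x,l) is differentiable at x with derivative equal to ∫₀ᶜ v·f(v)·f(v·x)·(l·φ(v) − φ(v·x)) dv. -/

import Mathlib

open MeasureTheory Set
open intervalIntegral Metric

/-- Expected revenue `g_f(x,l)` of the two-bidder click-through auction with CTR pair
`(1,l)`, i.i.d. values with density `f` on `[0,c]`, and signal ratio `s₂/s₁ = x`. -/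
noncomputable def gRev (c : ℝ) (f : ℝ → ℝ) (x l : ℝ) : ℝ :=
  (∫ v in (0 : ℝ)..c, v * x * (∫ u in (v * x)..c, f u) * f v)
  + l * ∫ v in (0 : ℝ)..(c * x), (v / x) * (∫ u in (v / x)..c, f u) * f v

/-- The virtual value function `φ(t) = t − (1 − F(t))/f(t)` where `F(t) = ∫₀ᵗ f`. -/
noncomputable def virtualValue (f : ℝ → ℝ) (t : ℝ) : ℝ :=
  t - (1 - ∫ u in (0 : ℝ)..t, f u) / f t

lemma key_algebra (v x l a b A B : ℝ) (ha : a ≠ 0) (hb : b ≠ 0) (hx : x ≠ 0) :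
    v * a * b * (l * (v - A/a) - (v*x - B/b)) =
      (v * B + v * x * (-b * v)) * a + l*x * (b * ((1 * A + v * -a) * ((0*x - v*x*1)/x^2))) := by
  field_simp
  ring

lemma lipschitzOnWith_weaken {α β : Type*} [PseudoEMetricSpace α] [PseudoEMetricSpace β]
    {K K' : NNReal} {f : α → β} {s : Set α} (h : LipschitzOnWith K f s) (hK : K ≤ K') :
    LipschitzOnWith K' f s :=
  fun _ hx _ hy => le_trans (h hx hy) (mul_le_mul_left (ENNReal.coe_le_coe.2 hK) _)

theorem gRev_hasDerivAt (c : ℝ) (hc : 0 < c) (f : ℝ → ℝ)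
    (hf_cont : ContinuousOn f (Set.Icc 0 c))
    (hf_pos : ∀ v ∈ Set.Icc (0 : ℝ) c, 0 < f v)
    (hf_int : (∫ v in (0 : ℝ)..c, f v) = 1) :
    ∀ l ∈ Set.Icc (0 : ℝ) 1, ∀ x ∈ Set.Ioo (0 : ℝ) 1,
      HasDerivAt (fun y => gRev c f y l)
        (∫ v in (0 : ℝ)..c,
          v * f v * f (v * x) * (l * virtualValue f v - virtualValue f (v * x))) x := by
  intro l hl x hx
  obtain ⟨hx0, hx1⟩ := hx
  have hproj : ∀ t : ℝ, max 0 (min t c) ∈ Icc 0 c :=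
    fun t => ⟨le_max_left _ _, max_le hc.le (min_le_right _ _)⟩
  set g : ℝ → ℝ := fun t => f (max 0 (min t c)) with hg_def
  have hg_cont : Continuous g :=
    hf_cont.comp_continuous (continuous_const.max (continuous_id.min continuous_const)) hproj
  have hg_eq : ∀ t ∈ Icc (0:ℝ) c, g t = f t := by
    intro t ht
    simp only [hg_def, min_eq_left ht.2, max_eq_right ht.1]
  have hg_pos : ∀ t, 0 < g t := fun t => hf_pos _ (hproj t)
  have hgi : ∀ a b : ℝ, IntervalIntegrable g volume a b :=
    fun a b => hg_cont.intervalIntegrable a b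
  have hg_int : (∫ v in (0:ℝ)..c, g v) = 1 := by
    rw [intervalIntegral.integral_congr (g := f) fun t ht => hg_eq t (by rwa [uIcc_of_le hc.le] at ht)]
    exact hf_int
  set F : ℝ → ℝ := fun t => ∫ u in (0:ℝ)..t, g u with hF_def
  set G : ℝ → ℝ := fun t => ∫ u in t..c, g u with hG_def
  have hFG : ∀ t, F t + G t = 1 := fun t => by
    rw [hF_def, hG_def]
    simp only
    rw [intervalIntegral.integral_add_adjacent_intervals (hgi 0 t) (hgi t c)]
    exact hg_int
  have hF : ∀ t, HasDerivAt F (g t) t := fun t =>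
    intervalIntegral.integral_hasDerivAt_right (hgi 0 t)
      (hg_cont.stronglyMeasurable.stronglyMeasurableAtFilter) hg_cont.continuousAt
  have hFc : Continuous F := intervalIntegral.continuous_primitive hgi 0
  have hG_cont : Continuous G :=
    ((show Continuous (fun _ : ℝ => (1:ℝ)) from continuous_const).sub hFc).congr fun t => by
      show 1 - F t = G t; linarith [hFG t]
  have hG : ∀ t, HasDerivAt G (-(g t)) t := by
    intro t
    have h1 : HasDerivAt (fun s => 1 - F s) (-(g t)) t := (hF t).const_sub 1
    exact h1.congr_of_eventuallyEq (Filter.Eventually.of_forall fun s => show G s = 1 - F s by linarith [hFG s])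
  obtain ⟨M, hM⟩ : ∃ M, ∀ t ∈ Icc (0:ℝ) c, |g t| ≤ M := by
    obtain ⟨M, hM⟩ := isCompact_Icc.exists_bound_of_continuousOn (hg_cont.continuousOn (s := Icc 0 c))
    exact ⟨M, fun t ht => by simpa [Real.norm_eq_abs] using hM t ht⟩
  have hM0 : 0 ≤ M := le_trans (abs_nonneg _) (hM 0 ⟨le_refl _, hc.le⟩)
  have hGbd : ∀ t ∈ Icc (0:ℝ) c, |G t| ≤ c * M := by
    intro t ht
    have := intervalIntegral.norm_integral_le_of_norm_le_const (C := M) (f := g) (a := t) (b := c)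
      (fun u hu => by
        rw [uIoc_of_le ht.2] at hu
        simpa [Real.norm_eq_abs] using hM u ⟨le_trans ht.1 hu.1.le, hu.2⟩)
    rw [Real.norm_eq_abs] at this
    calc |G t| ≤ M * |c - t| := this
    _ ≤ M * c := by
        rw [abs_of_nonneg (by linarith [ht.2])]
        nlinarith [ht.1, ht.2]
    _ = c * M := mul_comm _ _
  set ε : ℝ := min x (1-x) / 2 with hε_def
  have hε : 0 < ε := by
    have := lt_min hx0 (by linarith : (0:ℝ) < 1 - x)
    positivity
  have hball : ∀ y ∈ ball x ε, x/2 < y ∧ y < (1+x)/2 := by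
    intro y hy
    rw [mem_ball, Real.dist_eq, abs_sub_lt_iff] at hy
    constructor
    · nlinarith [min_le_left x (1-x), hy.2]
    · nlinarith [min_le_right x (1-x), hy.1]
  have hA := intervalIntegral.hasDerivAt_integral_of_dominated_loc_of_deriv_le
      (F := fun y v => v * y * G (v*y) * g v)
      (F' := fun y v => (v * G (v*y) + v * y * (-(g (v*y)) * v)) * g v)
      (x₀ := x) (a := 0) (b := c) (μ := volume)
      (bound := fun _ => (c*(c*M) + c*(M*c))*M) (ball_mem_nhds x hε)
      (Filter.Eventually.of_forall fun y =>
        ((((continuous_id.mul continuous_const).mul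
            (hG_cont.comp (continuous_id.mul continuous_const))).mul
            hg_cont).aestronglyMeasurable).restrict)
      (((((continuous_id.mul continuous_const).mul
            (hG_cont.comp (continuous_id.mul continuous_const))).mul
            hg_cont)).intervalIntegrable 0 c)
      (((((continuous_id.mul (hG_cont.comp (continuous_id.mul continuous_const))).add
          (((continuous_id.mul continuous_const).mul
            (((hg_cont.comp (continuous_id.mul continuous_const)).neg).mul continuous_id)))).mul
            hg_cont)).aestronglyMeasurable).restrict
      ?hbound (intervalIntegrable_const) ?hdiff
  case hbound =>
    refine Filter.Eventually.of_forall fun v hv y hy => ?_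
    rw [uIoc_of_le hc.le] at hv
    obtain ⟨hy1, hy2⟩ := hball y hy
    have hy0 : 0 < y := by linarith
    have hyle : y ≤ 1 := by linarith
    have hv0 : 0 < v := hv.1
    have hvc : v ≤ c := hv.2
    have hvy0 : 0 ≤ v * y := by positivity
    have hvyc : v * y ≤ c := le_trans (mul_le_of_le_one_right hv0.le hyle) hvc
    have e1 : |G (v*y)| ≤ c*M := hGbd _ ⟨hvy0, hvyc⟩
    have e2 : |g (v*y)| ≤ M := hM _ ⟨hvy0, hvyc⟩
    have e3 : |g v| ≤ M := hM _ ⟨hv0.le, hvc⟩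
    rw [Real.norm_eq_abs, abs_mul]
    have h1 : |v * G (v*y) + v * y * (-(g (v*y)) * v)| ≤ c*(c*M) + c*(M*c) := by
      refine (abs_add_le _ _).trans ?_
      have i1 : |v * G (v*y)| ≤ c*(c*M) := by
        rw [abs_mul, abs_of_pos hv0]
        nlinarith [abs_nonneg (G (v*y))]
      have i2 : |v * y * (-(g (v*y)) * v)| ≤ c*(M*c) := by
        simp only [abs_mul, abs_neg]
        rw [abs_of_pos hv0, abs_of_pos hy0]
        exact mul_le_mul hvyc (mul_le_mul e2 hvc hv0.le hM0) (mul_nonneg (abs_nonneg _) hv0.le) hc.le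
      linarith
    exact mul_le_mul h1 e3 (abs_nonneg _) (by positivity)
  case hdiff =>
    refine Filter.Eventually.of_forall fun v hv y hy => ?_
    have h1 : HasDerivAt (fun y : ℝ => v * y) v y := by
      simpa using (hasDerivAt_id y).const_mul v
    have h2 : HasDerivAt (fun y : ℝ => G (v*y)) (-(g (v*y)) * v) y := (hG (v*y)).comp y h1
    exact (h1.mul h2).mul_const (g v)
  -- Part B
  set m : ℝ → ℝ := fun t => min t c with hm_def
  set Ψ : ℝ → ℝ := fun t => m t * G (m t) with hΨ_def
  have hm_cont : Continuous m := continuous_id.min continuous_const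
  have hΨ_cont : Continuous Ψ := hm_cont.mul (hG_cont.comp hm_cont)
  have hGc0 : G c = 0 := intervalIntegral.integral_same
  set DB : ℝ → ℝ := fun v =>
    if v < c * x then g v * ((1 * G (v/x) + v/x * -(g (v/x))) * ((0 * x - v * 1)/x^2)) else 0
    with hDB_def
  set exprB : ℝ → ℝ := fun v =>
    g v * ((1 * G (v/x) + v/x * -(g (v/x))) * ((0 * x - v * 1)/x^2)) with hexprB_def
  have hexprB_cont : Continuous exprB := by
    have hdx : Continuous (fun v : ℝ => v / x) := continuous_id.div_const x
    exact hg_cont.mul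
      (((continuous_const.mul (hG_cont.comp hdx)).add
        (hdx.mul ((hg_cont.comp hdx).neg))).mul
        ((continuous_const.sub (continuous_id.mul continuous_const)).div_const _))
  have hDB_eq : DB = (Iio (c*x)).indicator exprB := by
    funext v
    simp [hDB_def, hexprB_def, Set.indicator_apply, Set.mem_Iio]
  have hB := intervalIntegral.hasDerivAt_integral_of_dominated_loc_of_lip
      (F := fun y v => g v * Ψ (v / y)) (F' := DB)
      (x₀ := x) (a := 0) (b := c) (μ := volume)
      (bound := fun v => M * (c*M + c*M) * (v / (x/2)^2)) (ball_mem_nhds x hε)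
      (Filter.Eventually.of_forall fun y =>
        ((hg_cont.mul (hΨ_cont.comp (continuous_id.div_const y))).aestronglyMeasurable).restrict)
      ((hg_cont.mul (hΨ_cont.comp (continuous_id.div_const x))).intervalIntegrable 0 c)
      (by
        rw [hDB_eq]
        exact ((hexprB_cont.stronglyMeasurable.indicator measurableSet_Iio).aestronglyMeasurable).restrict)
      ?hlip
      ((continuous_const.mul (continuous_id.div_const _)).intervalIntegrable 0 c)
      ?hdiffB
  case hlip =>
    refine Filter.Eventually.of_forall fun v hv => ?_
    rw [uIoc_of_le hc.le] at hv
    have hv0 : 0 < v := hv.1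
    have hvc : v ≤ c := hv.2
    have houter : LipschitzOnWith (Real.nnabs (M * (c*M + c*M)))
        (fun s => g v * (s * G s)) (Icc 0 c) := by
      refine (convex_Icc 0 c).lipschitzOnWith_of_nnnorm_hasDerivWithin_le
        (f' := fun s => g v * (1 * G s + s * -(g s)))
        (fun s hs => ((((hasDerivAt_id s).mul (hG s)).const_mul (g v))).hasDerivWithinAt)
        (fun s hs => ?_)
      rw [← NNReal.coe_le_coe, coe_nnnorm, Real.coe_nnabs, Real.norm_eq_abs]
      have e1 : |G s| ≤ c*M := hGbd s hs
      have e2 : |g s| ≤ M := hM s hs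
      have e3 : |g v| ≤ M := hM v ⟨hv0.le, hvc⟩
      have h4 : |1 * G s + s * -(g s)| ≤ c*M + c*M := by
        refine (abs_add_le _ _).trans ?_
        have i1 : |1 * G s| ≤ c*M := by rwa [one_mul]
        have i2 : |s * -(g s)| ≤ c*M := by
          rw [abs_mul, abs_neg, abs_of_nonneg hs.1]
          exact mul_le_mul hs.2 e2 (abs_nonneg _) hc.le
        linarith
      rw [abs_mul, abs_of_nonneg (by positivity : (0:ℝ) ≤ M * (c*M + c*M))]
      exact mul_le_mul e3 h4 (abs_nonneg _) hM0
    have hmlip : LipschitzOnWith ((1:NNReal)) m (Ici 0) :=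
      (LipschitzWith.id.min_const c).lipschitzOnWith
    have hmmaps : MapsTo m (Ici (0:ℝ)) (Icc 0 c) := fun t ht =>
      ⟨le_min ht hc.le, min_le_right _ _⟩
    have hinner : LipschitzOnWith (Real.nnabs (v / (x/2)^2)) (fun y => v / y) (ball x ε) := by
      refine (convex_ball x ε).lipschitzOnWith_of_nnnorm_hasDerivWithin_le
        (f' := fun y => (0 * y - v * 1)/y^2)
        (fun y hy => (((hasDerivAt_const y v).div (hasDerivAt_id y)
          (by linarith [(hball y hy).1] : y ≠ 0))).hasDerivWithinAt)
        (fun y hy => ?_)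
      obtain ⟨hy1, hy2⟩ := hball y hy
      have hy0 : (0:ℝ) < y := by linarith
      rw [← NNReal.coe_le_coe, coe_nnnorm, Real.coe_nnabs, Real.norm_eq_abs]
      show |(0 * y - v * 1)/y^2| ≤ |v / (x/2)^2|
      have heq : (0 * y - v * 1)/y^2 = -(v/y^2) := by field_simp; ring
      rw [heq, abs_neg, abs_div, abs_of_pos hv0, abs_of_pos (by positivity : (0:ℝ) < y^2),
        abs_div, abs_of_pos hv0, abs_of_pos (by positivity : (0:ℝ) < (x/2)^2)]
      have h2 : (x/2)^2 ≤ y^2 := by nlinarith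
      gcongr

    have hinnermaps : MapsTo (fun y => v / y) (ball x ε) (Ici (0:ℝ)) := fun y hy =>
      div_nonneg hv0.le (by linarith [(hball y hy).1])
    have htotal := (houter.comp hmlip hmmaps).comp hinner hinnermaps
    have hfd : (((fun s => g v * (s * G s)) ∘ m) ∘ (fun y => v / y))
        = fun y => g v * Ψ (v / y) := rfl
    rw [hfd] at htotal
    refine lipschitzOnWith_weaken htotal ?_
    rw [← NNReal.coe_le_coe]
    push_cast [Real.coe_nnabs]
    simp [abs_mul]
  case hdiffB =>
    have hne : ∀ᵐ v : ℝ ∂(volume : Measure ℝ), v ≠ c * x := by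
      rw [ae_iff]
      have : {a : ℝ | ¬ a ≠ c*x} = {c*x} := by ext a; simp
      rw [this]
      exact measure_singleton _
    filter_upwards [hne] with v hvne hvmem
    rcases hvne.lt_or_gt with hlt | hgt
    · have hvx : v / x < c := (div_lt_iff₀ hx0).2 (by linarith)
      have hdivc : ContinuousAt (fun y : ℝ => v / y) x :=
        continuousAt_const.div continuousAt_id hx0.ne'
      have hev : ∀ᶠ y in nhds x, v / y < c := hdivc.eventually_lt continuousAt_const hvx
      have hdiv : HasDerivAt (fun y : ℝ => v / y) ((0 * x - v * 1)/x^2) x :=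
        (hasDerivAt_const x v).div (hasDerivAt_id x) hx0.ne'
      have hφd : HasDerivAt (fun s => s * G s) (1 * G (v/x) + v/x * -(g (v/x))) (v/x) :=
        (hasDerivAt_id _).mul (hG _)
      have hcomp := (hφd.comp x hdiv).const_mul (g v)
      have : DB v = g v * ((1 * G (v/x) + v/x * -(g (v/x))) * ((0 * x - v * 1)/x^2)) := by
        rw [hDB_def]; simp only; rw [if_pos hlt]
      rw [this]
      refine hcomp.congr_of_eventuallyEq ?_
      filter_upwards [hev] with y hy
      show g v * Ψ (v/y) = g v * ((fun s => s * G s) ((fun y => v / y) y))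
      rw [hΨ_def]
      simp only [hm_def, min_eq_left hy.le]
    · have hvx : c < v / x := (lt_div_iff₀ hx0).2 (by linarith)
      have hdivc : ContinuousAt (fun y : ℝ => v / y) x :=
        continuousAt_const.div continuousAt_id hx0.ne'
      have hev : ∀ᶠ y in nhds x, c < v / y := continuousAt_const.eventually_lt hdivc hvx
      have : DB v = 0 := by
        rw [hDB_def]; simp only; rw [if_neg (not_lt.2 hgt.le)]
      rw [this]
      refine (hasDerivAt_const x (g v * (c * G c))).congr_of_eventuallyEq ?_
      filter_upwards [hev] with y hy
      show g v * Ψ (v/y) = g v * (c * G c)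
      rw [hΨ_def]
      simp only [hm_def, min_eq_right hy.le]
  -- gRev agrees with the g-version near x
  have hgrev : ∀ y ∈ Ioo (0:ℝ) 1, gRev c f y l
      = (∫ v in (0:ℝ)..c, v * y * G (v*y) * g v) + l * ∫ v in (0:ℝ)..c, g v * Ψ (v / y) := by
    intro y hy
    obtain ⟨hy0, hy1⟩ := hy
    have hcy0 : 0 ≤ c * y := by positivity
    have hcyc : c * y ≤ c := by nlinarith
    have t1 : (∫ v in (0:ℝ)..c, v * y * (∫ u in (v * y)..c, f u) * f v)
        = ∫ v in (0:ℝ)..c, v * y * G (v*y) * g v := by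
      refine intervalIntegral.integral_congr fun v hv => ?_
      rw [uIcc_of_le hc.le] at hv
      have hvy0 : (0:ℝ) ≤ v * y := mul_nonneg hv.1 hy0.le
      have hvyc : v * y ≤ c := (mul_le_of_le_one_right hv.1 hy1.le).trans hv.2
      have hin : (∫ u in (v * y)..c, f u) = G (v*y) := by
        refine intervalIntegral.integral_congr fun u hu => ?_
        rw [uIcc_of_le hvyc] at hu
        exact (hg_eq u ⟨le_trans hvy0 hu.1, hu.2⟩).symm
      rw [hin, hg_eq v hv]
    have t2 : (∫ v in (0:ℝ)..(c*y), (v / y) * (∫ u in (v / y)..c, f u) * f v)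
        = ∫ v in (0:ℝ)..c, g v * Ψ (v / y) := by
      have s1 : (∫ v in (0:ℝ)..(c*y), (v / y) * (∫ u in (v / y)..c, f u) * f v)
          = ∫ v in (0:ℝ)..(c*y), g v * Ψ (v / y) := by
        refine intervalIntegral.integral_congr fun v hv => ?_
        rw [uIcc_of_le hcy0] at hv
        have hv0 : (0:ℝ) ≤ v := hv.1
        have hvyc : v / y ≤ c := by rw [div_le_iff₀ hy0]; nlinarith [hv.2]
        have hvy0 : (0:ℝ) ≤ v / y := div_nonneg hv0 hy0.le
        have hin : (∫ u in (v / y)..c, f u) = G (v / y) := by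
          refine intervalIntegral.integral_congr fun u hu => ?_
          rw [uIcc_of_le hvyc] at hu
          exact (hg_eq u ⟨le_trans hvy0 hu.1, hu.2⟩).symm
        rw [hin, hg_eq v ⟨hv0, le_trans hv.2 hcyc⟩]
        show (v/y) * G (v/y) * f v = f v * Ψ (v/y)
        rw [hΨ_def]
        simp only [hm_def, min_eq_left hvyc]
        ring
      have s2 : (∫ v in (c*y)..c, g v * Ψ (v / y)) = 0 := by
        rw [intervalIntegral.integral_congr (g := fun _ => (0:ℝ)) ?_]
        · exact intervalIntegral.integral_zero
        intro v hv
        rw [uIcc_of_le hcyc] at hv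
        have hcy : c ≤ v / y := by rw [le_div_iff₀ hy0]; nlinarith [hv.1]
        show g v * Ψ (v/y) = 0
        rw [hΨ_def]
        simp only [hm_def, min_eq_right hcy]
        rw [hGc0]
        ring
      have hint : ∀ (a b : ℝ), IntervalIntegrable (fun v => g v * Ψ (v / y)) volume a b :=
        fun a b => Continuous.intervalIntegrable
          (hg_cont.mul (hΨ_cont.comp (continuous_id.div_const y))) a b
      have s3 := intervalIntegral.integral_add_adjacent_intervals (μ := volume)
        (hint 0 (c*y)) (hint (c*y) c)
      rw [s1, ← s3, s2, add_zero]
    rw [gRev, t1, t2]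
  have heq : (fun y => gRev c f y l) =ᶠ[nhds x]
      (fun y => (∫ v in (0:ℝ)..c, v * y * G (v*y) * g v)
        + l * ∫ v in (0:ℝ)..c, g v * Ψ (v / y)) :=
    Filter.eventuallyEq_of_mem (Ioo_mem_nhds hx0 hx1) (fun y hy => hgrev y hy)
  have hDer := (hA.2.add (hB.2.const_mul l)).congr_of_eventuallyEq heq
  beta_reduce at hDer
  -- compute the value of the B-derivative integral
  have hcx0 : (0:ℝ) ≤ c * x := by positivity
  have hcxc : c * x ≤ c := by nlinarith
  have hDBint : (∫ v in (0:ℝ)..c, DB v) = ∫ v in (0:ℝ)..(c*x), exprB v := by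
    rw [hDB_eq, intervalIntegral.integral_of_le hc.le, intervalIntegral.integral_of_le hcx0]
    rw [MeasureTheory.setIntegral_indicator measurableSet_Iio]
    have hset : Ioc (0:ℝ) c ∩ Iio (c*x) = Ioo 0 (c*x) := by
      ext w
      simp only [mem_inter_iff, mem_Ioc, mem_Iio, mem_Ioo]
      constructor
      · rintro ⟨⟨h1, h2⟩, h3⟩; exact ⟨h1, h3⟩
      · rintro ⟨h1, h3⟩; exact ⟨⟨h1, le_trans h3.le hcxc⟩, h3⟩
    rw [hset, ← MeasureTheory.integral_Ioc_eq_integral_Ioo]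
  set Hfun : ℝ → ℝ := fun w =>
    g (w*x) * ((1 * G w + w * -(g w)) * ((0 * x - (w*x) * 1)/x^2)) with hH_def
  have hH_cont : Continuous Hfun := by
    have hmx : Continuous (fun w : ℝ => w * x) := continuous_id.mul continuous_const
    exact (hg_cont.comp hmx).mul
      (((continuous_const.mul hG_cont).add (continuous_id.mul hg_cont.neg)).mul
        ((continuous_const.sub (hmx.mul continuous_const)).div_const _))
  have hHeq : ∀ v : ℝ, exprB v = Hfun (v/x) := by
    intro v
    rw [hexprB_def, hH_def]
    simp only
    rw [div_mul_cancel₀ _ hx0.ne']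
  have hcv : (∫ v in (0:ℝ)..(c*x), exprB v) = x • ∫ w in (0:ℝ)..c, Hfun w := by
    rw [intervalIntegral.integral_congr (g := fun v => Hfun (v/x)) (fun v _ => hHeq v)]
    rw [intervalIntegral.integral_comp_div Hfun hx0.ne']
    rw [zero_div, mul_div_cancel_right₀ _ hx0.ne']
  rw [hDBint, hcv] at hDer
  have hint1 : IntervalIntegrable
      (fun v => (v * G (v*x) + v * x * (-(g (v*x)) * v)) * g v) volume 0 c :=
    Continuous.intervalIntegrable
      (((continuous_id.mul (hG_cont.comp (continuous_id.mul continuous_const))).add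
        (((continuous_id.mul continuous_const).mul
          (((hg_cont.comp (continuous_id.mul continuous_const)).neg).mul continuous_id)))).mul
        hg_cont) 0 c
  have hint2 : IntervalIntegrable (fun v => (l*x) * Hfun v) volume 0 c :=
    Continuous.intervalIntegrable (continuous_const.mul hH_cont) 0 c
  have hval : (∫ v in (0:ℝ)..c,
        v * f v * f (v * x) * (l * virtualValue f v - virtualValue f (v * x)))
      = (∫ v in (0:ℝ)..c, (v * G (v*x) + v * x * (-(g (v*x)) * v)) * g v)
        + l * (x • ∫ w in (0:ℝ)..c, Hfun w) := by
    rw [smul_eq_mul, ← mul_assoc, ← intervalIntegral.integral_const_mul]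
    rw [← intervalIntegral.integral_add hint1 hint2]
    refine intervalIntegral.integral_congr fun v hv => ?_
    rw [uIcc_of_le hc.le] at hv
    have hv0 : (0:ℝ) ≤ v := hv.1
    have hvc : v ≤ c := hv.2
    have hvx0 : (0:ℝ) ≤ v * x := mul_nonneg hv0 hx0.le
    have hvxc : v * x ≤ c := (mul_le_of_le_one_right hv0 hx1.le).trans hvc
    have hfv : f v = g v := (hg_eq v hv).symm
    have hfvx : f (v*x) = g (v*x) := (hg_eq _ ⟨hvx0, hvxc⟩).symm
    have hFv : (∫ u in (0:ℝ)..v, f u) = F v := by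
      refine intervalIntegral.integral_congr fun u hu => ?_
      rw [uIcc_of_le hv0] at hu
      exact (hg_eq u ⟨hu.1, hu.2.trans hvc⟩).symm
    have hFvx : (∫ u in (0:ℝ)..(v*x), f u) = F (v*x) := by
      refine intervalIntegral.integral_congr fun u hu => ?_
      rw [uIcc_of_le hvx0] at hu
      exact (hg_eq u ⟨hu.1, hu.2.trans hvxc⟩).symm
    have hGv : (1:ℝ) - F v = G v := by linarith [hFG v]
    have hGvx : (1:ℝ) - F (v*x) = G (v*x) := by linarith [hFG (v*x)]
    simp only [virtualValue]
    rw [hFv, hFvx, hfv, hfvx, hGv, hGvx, hH_def]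
    exact key_algebra v x l (g v) (g (v*x)) (G v) (G (v*x))
      (hg_pos v).ne' (hg_pos (v*x)).ne' hx0.ne'
  rw [hval]
  exact hDer
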